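/- For every angle ψ with |ψ| < π, the 2×2 rotation matrix U_ψ can be written as a product of four symmetric positive definite real 2×2 matrices. -/

import Mathlib

set_option maxHeartbeats 1000000

open Matrix Real

lemma aux_conj_posDef {n : Type*} [Fintype n] [DecidableEq n] {D Q P : Matrix n n ℝ}
    (hD : D.PosDef) (hQP : Q * P = 1) : (Pᵀ * D * P).PosDef := by
  have hDt : Dᵀ = D := by
    have h := hD.1.eq; rwa [Matrix.conjTranspose_eq_transpose_of_trivial] at h
  refine Matrix.PosDef.of_dotProduct_mulVec_pos ?_ (fun x hx => ?_)
  · show (Pᵀ * D * P)ᴴ = _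
    rw [Matrix.conjTranspose_eq_transpose_of_trivial]
    simp [Matrix.transpose_mul, hDt, Matrix.mul_assoc]
  · have hPx : P *ᵥ x ≠ 0 := by
      intro h
      apply hx
      have h2 : Q *ᵥ (P *ᵥ x) = Q *ᵥ 0 := by rw [h]
      simpa [Matrix.mulVec_mulVec, hQP] using h2
    have key : star x ⬝ᵥ (Pᵀ * D * P) *ᵥ x
        = star (P *ᵥ x) ⬝ᵥ D *ᵥ (P *ᵥ x) := by
      simp only [star_trivial]
      rw [← Matrix.mulVec_mulVec, ← Matrix.mulVec_mulVec,
        Matrix.dotProduct_mulVec x Pᵀ, Matrix.vecMul_transpose]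
    rw [key]
    exact hD.dotProduct_mulVec_pos hPx

/-- The 2×2 rotation matrix by angle `ψ`. -/
noncomputable def rotMat (ψ : ℝ) : Matrix (Fin 2) (Fin 2) ℝ :=
  !![Real.cos ψ, Real.sin ψ; -Real.sin ψ, Real.cos ψ]

/-- For every angle `ψ` with `|ψ| < π`, the 2×2 rotation matrix `U_ψ` can be
written as a product of four symmetric positive definite real 2×2 matrices. -/
theorem rotation_eq_product_of_four_posDef (ψ : ℝ) (hψ : |ψ| < Real.pi) :
    ∃ M₁ M₂ M₃ M₄ : Matrix (Fin 2) (Fin 2) ℝ,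
      M₁.PosDef ∧ M₂.PosDef ∧ M₃.PosDef ∧ M₄.PosDef ∧
      rotMat ψ = M₄ * M₃ * M₂ * M₁ := by
  obtain ⟨h1, h2⟩ := abs_lt.mp hψ
  by_cases hs : Real.sin ψ = 0
  · -- then ψ = 0 and the rotation is the identity
    have hψ0 : ψ = 0 := (Real.sin_eq_zero_iff_of_lt_of_lt h1 h2).mp hs
    refine ⟨1, 1, 1, 1, Matrix.PosDef.one, Matrix.PosDef.one, Matrix.PosDef.one,
      Matrix.PosDef.one, ?_⟩
    subst hψ0
    ext i j
    fin_cases i <;> fin_cases j <;> simp [rotMat, Matrix.one_apply]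
  · set c := Real.cos ψ with hc
    set s := Real.sin ψ with hsdef
    have hsc : s ^ 2 + c ^ 2 = 1 := Real.sin_sq_add_cos_sq ψ
    -- the matrices
    set QX : Matrix (Fin 2) (Fin 2) ℝ :=
      !![4*s, 2*s; 4*c - 1, 2*(c-1)] with hQX
    set PX : Matrix (Fin 2) (Fin 2) ℝ :=
      !![(1-c)/(3*s), 1/3; (4*c-1)/(6*s), -2/3] with hPX
    set QY : Matrix (Fin 2) (Fin 2) ℝ := !![1, 0; 5*(c-1)/(3*s), 1] with hQY
    set PY : Matrix (Fin 2) (Fin 2) ℝ := !![1, 0; -(5*(c-1)/(3*s)), 1] with hPY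
    set D : Matrix (Fin 2) (Fin 2) ℝ := !![2, 0; 0, 1/2] with hD
    set X : Matrix (Fin 2) (Fin 2) ℝ :=
      !![(5-4*c)/2, 2*s; (5*c-4*c^2-1)/(2*s), 2*c] with hX
    set Y : Matrix (Fin 2) (Fin 2) ℝ := !![2, 0; 5*(c-1)/(2*s), 1/2] with hY
    have hDpd : D.PosDef := by
      have hdiag : D = Matrix.diagonal ![2, 1/2] := by
        ext i j
        fin_cases i <;> fin_cases j <;> simp [hD, Matrix.diagonal]
      rw [hdiag]
      refine Matrix.PosDef.diagonal ?_
      intro i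
      fin_cases i <;> norm_num
    have hQXPX : QX * PX = 1 := by
      ext i j
      fin_cases i <;> fin_cases j <;>
        simp [hQX, hPX, Matrix.mul_apply, Fin.sum_univ_two, Matrix.one_apply] <;>
        field_simp <;> ring
    have hPXQX : PX * QX = 1 := by
      ext i j
      fin_cases i <;> fin_cases j <;>
        simp [hQX, hPX, Matrix.mul_apply, Fin.sum_univ_two, Matrix.one_apply] <;>
        field_simp <;> ring
    have hQYPY : QY * PY = 1 := by
      ext i j
      fin_cases i <;> fin_cases j <;>
        simp [hQY, hPY, Matrix.mul_apply, Fin.sum_univ_two, Matrix.one_apply] <;>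
        field_simp
    have hPYQY : PY * QY = 1 := by
      ext i j
      fin_cases i <;> fin_cases j <;>
        simp [hQY, hPY, Matrix.mul_apply, Fin.sum_univ_two, Matrix.one_apply] <;>
        field_simp
    have hXeq : QX * D * PX = X := by
      ext i j
      fin_cases i <;> fin_cases j <;>
        simp [hQX, hPX, hD, hX, Matrix.mul_apply, Fin.sum_univ_two] <;>
        field_simp <;> ring
    have hYeq : QY * D * PY = Y := by
      ext i j
      fin_cases i <;> fin_cases j <;>
        simp [hQY, hPY, hD, hY, Matrix.mul_apply, Fin.sum_univ_two] <;>
        field_simp <;> ring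
    have hXY : rotMat ψ = X * Y := by
      ext i j
      fin_cases i <;> fin_cases j <;>
        simp [rotMat, hX, hY, Matrix.mul_apply, Fin.sum_univ_two, ← hc, ← hsdef] <;>
        field_simp <;> nlinarith [hsc]
    refine ⟨PYᵀ * D * PY, QY * QYᵀ, PXᵀ * D * PX, QX * QXᵀ,
      aux_conj_posDef hDpd hQYPY, ?_, aux_conj_posDef hDpd hQXPX, ?_, ?_⟩
    · have h : (QYᵀ)ᵀ * (1 : Matrix (Fin 2) (Fin 2) ℝ) * QYᵀ = QY * QYᵀ := by
        simp [Matrix.transpose_transpose]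
      rw [← h]
      exact aux_conj_posDef Matrix.PosDef.one (by rw [← Matrix.transpose_mul, hQYPY]; simp)
    · have h : (QXᵀ)ᵀ * (1 : Matrix (Fin 2) (Fin 2) ℝ) * QXᵀ = QX * QXᵀ := by
        simp [Matrix.transpose_transpose]
      rw [← h]
      exact aux_conj_posDef Matrix.PosDef.one (by rw [← Matrix.transpose_mul, hQXPX]; simp)
    · have hXt : QXᵀ * PXᵀ = 1 := by rw [← Matrix.transpose_mul, hPXQX]; simp
      have hYt : QYᵀ * PYᵀ = 1 := by rw [← Matrix.transpose_mul, hPYQY]; simp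
      calc rotMat ψ = X * Y := hXY
        _ = (QX * D * PX) * (QY * D * PY) := by rw [hXeq, hYeq]
        _ = QX * ((QXᵀ * PXᵀ) * D) * (PX * QY) * ((QYᵀ * PYᵀ) * D) * PY := by
            rw [hXt, hYt]; noncomm_ring
        _ = QX * QXᵀ * (PXᵀ * D * PX) * (QY * QYᵀ) * (PYᵀ * D * PY) := by
            noncomm_ring
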